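/- Let 𝒳 be a measurable space, H a real Hilbert space, and φ : 𝒳 → H a bounded strongly measurable map such that ‖φ(x) − φ(y)‖ ≤ C for all x, y ∈ 𝒳, where C ≥ 0. Let P and Q be probability measures on 𝒳, and let π be a probability measure on 𝒳 × 𝒳 whose first marginal is P and whose second marginal is Q (i.e., the pushforward of π under the first projection is P and under the second projection is Q). If the diagonal complement {(x,y) : x ≠ y} is measurable, then ‖∫ φ dP − ∫ φ dQ‖ ≤ C · π({(x,y) ∈ 𝒳 × 𝒳 : x ≠ y}). -/

import Mathlib

open MeasureTheory

/-- If `π` is a coupling of `P` and `Q` and `‖φ x − φ y‖ ≤ C` for all `x, y`, then the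
distance between the mean embeddings is at most `C · π({(x,y) : x ≠ y})`. -/
theorem mean_embedding_dist_le_coupling
    {𝒳 : Type*} [MeasurableSpace 𝒳]
    {H : Type*} [NormedAddCommGroup H] [InnerProductSpace ℝ H] [CompleteSpace H]
    (φ : 𝒳 → H) (hφ : StronglyMeasurable φ)
    (hbdd : ∃ M : ℝ, ∀ x : 𝒳, ‖φ x‖ ≤ M)
    (C : ℝ) (hC0 : 0 ≤ C) (hC : ∀ x y : 𝒳, ‖φ x - φ y‖ ≤ C)
    (P Q : Measure 𝒳) [IsProbabilityMeasure P] [IsProbabilityMeasure Q]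
    (π : Measure (𝒳 × 𝒳)) [IsProbabilityMeasure π]
    (hfst : π.map Prod.fst = P) (hsnd : π.map Prod.snd = Q)
    (hdiag : MeasurableSet {p : 𝒳 × 𝒳 | p.1 ≠ p.2}) :
    ‖(∫ x, φ x ∂P) - ∫ x, φ x ∂Q‖ ≤
      C * (π {p : 𝒳 × 𝒳 | p.1 ≠ p.2}).toReal := by
  obtain ⟨M, hM⟩ := hbdd
  have h1 : StronglyMeasurable fun p : 𝒳 × 𝒳 => φ p.1 := hφ.comp_measurable measurable_fst
  have h2 : StronglyMeasurable fun p : 𝒳 × 𝒳 => φ p.2 := hφ.comp_measurable measurable_snd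
  have hi1 : Integrable (fun p : 𝒳 × 𝒳 => φ p.1) π :=
    ⟨h1.aestronglyMeasurable, HasFiniteIntegral.of_bounded (C := M)
      (Filter.Eventually.of_forall fun p => hM p.1)⟩
  have hi2 : Integrable (fun p : 𝒳 × 𝒳 => φ p.2) π :=
    ⟨h2.aestronglyMeasurable, HasFiniteIntegral.of_bounded (C := M)
      (Filter.Eventually.of_forall fun p => hM p.2)⟩
  have eP : (∫ x, φ x ∂P) = ∫ p, φ p.1 ∂π := by
    rw [← hfst, integral_map measurable_fst.aemeasurable hφ.aestronglyMeasurable]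
  have eQ : (∫ x, φ x ∂Q) = ∫ p, φ p.2 ∂π := by
    rw [← hsnd, integral_map measurable_snd.aemeasurable hφ.aestronglyMeasurable]
  rw [eP, eQ, ← integral_sub hi1 hi2]
  calc ‖∫ p, (φ p.1 - φ p.2) ∂π‖
      ≤ ∫ p, ‖φ p.1 - φ p.2‖ ∂π := norm_integral_le_integral_norm _
    _ ≤ ∫ p, Set.indicator {p : 𝒳 × 𝒳 | p.1 ≠ p.2} (fun _ => C) p ∂π := by
        apply integral_mono ((hi1.sub hi2).norm)
        · exact (integrable_const C).indicator hdiag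
        · intro p
          by_cases h : p.1 = p.2
          · have : p ∉ {p : 𝒳 × 𝒳 | p.1 ≠ p.2} := by simp [h]
            simp [Set.indicator_of_notMem this, h]
          · have hm : p ∈ {p : 𝒳 × 𝒳 | p.1 ≠ p.2} := h
            rw [Set.indicator_of_mem hm]
            exact hC _ _
    _ = C * (π {p : 𝒳 × 𝒳 | p.1 ≠ p.2}).toReal := by
        rw [integral_indicator_const _ hdiag, smul_eq_mul, mul_comm, Measure.real]
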